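/- Let K ⊆ L be an extension of differential fields of characteristic zero, let a ∈ K, and let α ∈ L satisfy α′ = a. Assume a is not a derivative in K, i.e. there is no b ∈ K with b′ = a. Then the extension K(α) (the subfield of L generated by K and α, which is a differential subfield) has the same constants as K: every x ∈ K(α) with x′ = 0 is an element c of K with c′ = 0. -/

import Mathlib

open Polynomial

section Aux

variable {K : Type*} [Field K] [CharZero K]

/-- Coefficientwise derivative of a polynomial. -/
noncomputable def mapD (dK : Derivation ℚ K K) (r : K[X]) : K[X] :=
  ⟨AddMonoidAlgebra.ofCoeff (Finsupp.mapRange dK (map_zero dK) r.toFinsupp.coeff)⟩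

@[simp] lemma coeff_mapD (dK : Derivation ℚ K K) (r : K[X]) (k : ℕ) :
    (mapD dK r).coeff k = dK (r.coeff k) := by
  simp [mapD, coeff, Finsupp.mapRange_apply]

lemma mapD_add (dK : Derivation ℚ K K) (p q : K[X]) :
    mapD dK (p + q) = mapD dK p + mapD dK q := by
  ext k; simp

lemma mapD_monomial (dK : Derivation ℚ K K) (n : ℕ) (c : K) :
    mapD dK (monomial n c) = monomial n (dK c) := by
  ext k; simp [coeff_monomial, apply_ite dK]

/-- The total derivative on polynomials, where `X′ = a`. -/
noncomputable def DD (dK : Derivation ℚ K K) (a : K) (r : K[X]) : K[X] :=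
  mapD dK r + C a * derivative r

@[simp] lemma coeff_DD (dK : Derivation ℚ K K) (a : K) (r : K[X]) (k : ℕ) :
    (DD dK a r).coeff k = dK (r.coeff k) + a * (r.coeff (k + 1) * (k + 1)) := by
  simp [DD, coeff_derivative]

lemma DD_one (dK : Derivation ℚ K K) (a : K) : DD dK a 1 = 0 := by
  ext k
  rcases k with _ | k <;> simp [coeff_one]

/-- Key: if `DD r = 0` and `a` is not a derivative then `r` is constant. -/
lemma natDegree_eq_zero_of_DD_eq_zero (dK : Derivation ℚ K K) (a : K)
    (ha : ¬ ∃ b : K, dK b = a) {r : K[X]} (h : DD dK a r = 0) :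
    r.natDegree = 0 := by
  by_contra hn
  have hc1 : ∀ k, dK (r.coeff k) + a * (r.coeff (k + 1) * ((k : K) + 1)) = 0 := fun k => by
    have := congrArg (fun s => Polynomial.coeff s k) h
    simpa using this
  have hr0 : r ≠ 0 := fun h0 => hn (by simp [h0])
  obtain ⟨m, hm⟩ : ∃ m, r.natDegree = m + 1 := ⟨r.natDegree - 1, by omega⟩
  have hlead : dK (r.coeff (m + 1)) = 0 := by
    have h2 := hc1 (m + 1)
    rw [show r.coeff (m + 1 + 1) = 0 from coeff_eq_zero_of_natDegree_lt (by omega)] at h2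
    simpa using h2
  have hsub : dK (r.coeff m) + a * (r.coeff (m + 1) * ((m : K) + 1)) = 0 := hc1 m
  apply ha
  refine ⟨-(r.coeff m) / (((m : K) + 1) * r.coeff (m + 1)), ?_⟩
  have hrn : r.coeff (m + 1) ≠ 0 := by
    have := leadingCoeff_ne_zero.mpr hr0
    rwa [leadingCoeff, hm] at this
  have hm1 : ((m : K) + 1) ≠ 0 := by
    have : ((m + 1 : ℕ) : K) ≠ 0 := Nat.cast_ne_zero.mpr (Nat.succ_ne_zero m)
    push_cast at this
    exact this
  have hv : ((m : K) + 1) * r.coeff (m + 1) ≠ 0 := mul_ne_zero hm1 hrn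
  have hdv : dK (((m : K) + 1) * r.coeff (m + 1)) = 0 := by
    rw [Derivation.leibniz, hlead]
    have : dK ((m : K) + 1) = 0 := by
      have : ((m : K) + 1) = ((m + 1 : ℕ) : K) := by push_cast; ring
      rw [this, Derivation.map_natCast]
    rw [this]
    simp
  have hdu : dK (r.coeff m) = -(a * (r.coeff (m + 1) * ((m : K) + 1))) := by
    linear_combination hsub
  rw [Derivation.leibniz_div, hdv, map_neg, hdu]
  simp only [smul_eq_mul, mul_zero, sub_zero, neg_neg]
  field_simp

end Aux

section Key

variable {K L : Type*} [Field K] [Field L] [Algebra K L] [CharZero K] [CharZero L]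

lemma dL_aeval (dK : Derivation ℚ K K) (dL : Derivation ℚ L L)
    (hcompat : ∀ x : K, dL (algebraMap K L x) = algebraMap K L (dK x))
    (a : K) (α : L) (hα : dL α = algebraMap K L a) (r : K[X]) :
    dL (aeval α r) = aeval α (DD dK a r) := by
  induction r using Polynomial.induction_on' with
  | add p q hp hq =>
    simp only [map_add, hp, hq, DD, mapD_add, derivative_add, mul_add]
    ring
  | monomial n c =>
    simp only [DD, mapD_monomial, derivative_monomial, aeval_monomial, map_add, map_mul, aeval_C,
      Derivation.leibniz, Derivation.leibniz_pow, hα, hcompat, smul_eq_mul, map_natCast]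
    ring

end Key

theorem constants_of_adjoin_integral
    (K L : Type*) [Field K] [Field L] [Algebra K L]
    [CharZero K] [CharZero L]
    (dK : Derivation ℚ K K) (dL : Derivation ℚ L L)
    (hcompat : ∀ x : K, dL (algebraMap K L x) = algebraMap K L (dK x))
    (a : K) (α : L) (hα : dL α = algebraMap K L a)
    (ha : ¬ ∃ b : K, dK b = a) :
    ∀ x : L, x ∈ IntermediateField.adjoin K {α} → dL x = 0 →
      ∃ c : K, dK c = 0 ∧ algebraMap K L c = x := by
  classical
  have key := dL_aeval dK dL hcompat a α hα
  have degDD : ∀ r : K[X], 0 < r.natDegree → dK r.leadingCoeff = 0 →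
      (DD dK a r).degree < r.degree := by
    intro r hr hlc
    have hr0 : r ≠ 0 := fun h0 => by simp [h0] at hr
    rw [degree_eq_natDegree hr0, degree_lt_iff_coeff_zero]
    intro m hm
    have hm' : r.natDegree ≤ m := by exact_mod_cast hm
    rw [coeff_DD,
      show r.coeff (m + 1) = 0 from coeff_eq_zero_of_natDegree_lt (by omega)]
    rcases eq_or_lt_of_le hm' with hm2 | hm2
    · rw [← hm2]
      have : dK (r.coeff r.natDegree) = 0 := by
        rwa [← leadingCoeff]
      rw [this]
      simp
    · rw [show r.coeff m = 0 from coeff_eq_zero_of_natDegree_lt hm2]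
      simp
  -- α is transcendental over K
  have htrans : Transcendental K α := by
    intro halg
    have hint : IsIntegral K α := halg.isIntegral
    set p := minpoly K α with hp
    have hpm : p.Monic := minpoly.monic hint
    have hpd : 0 < p.natDegree := minpoly.natDegree_pos hint
    have h0 : aeval α (DD dK a p) = 0 := by
      rw [← key, minpoly.aeval, map_zero]
    have hdvd : p ∣ DD dK a p := minpoly.dvd K α h0
    have hDD0 : DD dK a p = 0 :=
      Polynomial.eq_zero_of_dvd_of_degree_lt hdvd
        (degDD p hpd (by rw [hpm.leadingCoeff]; simp))
    have := natDegree_eq_zero_of_DD_eq_zero dK a ha hDD0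
    omega
  have hinj : Function.Injective (aeval α : K[X] →ₐ[K] L) :=
    transcendental_iff_injective.mp htrans
  intro x hx hdx
  rw [IntermediateField.mem_adjoin_simple_iff] at hx
  obtain ⟨p, q, hx⟩ := hx
  by_cases hq0 : aeval α q = 0
  · exact ⟨0, by simp, by rw [map_zero, hx, hq0, div_zero]⟩
  have hqne : q ≠ 0 := fun h => hq0 (by simp [h])
  -- pass to a coprime representation
  obtain ⟨p₁, q₁, hcop, hq1ne, hq1v, hx1⟩ :
      ∃ p₁ q₁ : K[X], IsCoprime p₁ q₁ ∧ q₁ ≠ 0 ∧ aeval α q₁ ≠ 0 ∧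
        x = aeval α p₁ / aeval α q₁ := by
    have hg : GCDMonoid.gcd p q ≠ 0 := gcd_ne_zero_of_right hqne
    have hp' := EuclideanDomain.mul_div_cancel' hg (gcd_dvd_left p q)
    have hq' := EuclideanDomain.mul_div_cancel' hg (gcd_dvd_right p q)
    have hgα : aeval α (GCDMonoid.gcd p q) ≠ 0 := fun h =>
      hq0 (by rw [← hq', map_mul, h, zero_mul])
    refine ⟨p / GCDMonoid.gcd p q, q / GCDMonoid.gcd p q,
      isCoprime_div_gcd_div_gcd hqne, right_div_gcd_ne_zero hqne, ?_, ?_⟩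
    · intro h
      apply hq0
      rw [← hq', map_mul, h, mul_zero]
    · have e1 : aeval α p = aeval α (GCDMonoid.gcd p q) * aeval α (p / GCDMonoid.gcd p q) := by
        rw [← map_mul, hp']
      have e2 : aeval α q = aeval α (GCDMonoid.gcd p q) * aeval α (q / GCDMonoid.gcd p q) := by
        rw [← map_mul, hq']
      rw [hx, e1, e2, mul_div_mul_left _ _ hgα]
  -- normalize denominator to be monic
  have hcne : q₁.leadingCoeff ≠ 0 := leadingCoeff_ne_zero.mpr hq1ne
  obtain ⟨P, hP⟩ : ∃ P : K[X], P = p₁ * C q₁.leadingCoeff⁻¹ := ⟨_, rfl⟩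
  obtain ⟨Q, hQ⟩ : ∃ Q : K[X], Q = q₁ * C q₁.leadingCoeff⁻¹ := ⟨_, rfl⟩
  have hQm : Q.Monic := hQ ▸ monic_mul_leadingCoeff_inv hq1ne
  have hcopPQ : IsCoprime P Q := by
    rw [hP, hQ]
    exact (isCoprime_mul_unit_right (isUnit_C.mpr hcne.isUnit.inv) p₁ q₁).mpr hcop
  have hcinv : algebraMap K L q₁.leadingCoeff⁻¹ ≠ 0 := by
    simpa using inv_ne_zero hcne
  have hQα : aeval α Q ≠ 0 := by
    rw [hQ, map_mul, aeval_C]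
    exact mul_ne_zero hq1v hcinv
  have hxPQ : x = aeval α P / aeval α Q := by
    rw [hx1, hP, hQ, map_mul, map_mul, aeval_C, mul_div_mul_right _ _ hcinv]
  -- from dL x = 0 derive a polynomial identity
  have h0 : aeval α Q * dL (aeval α P) - aeval α P * dL (aeval α Q) = 0 := by
    rw [hxPQ, Derivation.leibniz_div] at hdx
    rcases smul_eq_zero.mp hdx with h | h
    · exact absurd h (pow_ne_zero 2 (inv_ne_zero hQα))
    · simpa [smul_eq_mul] using h
  have heq : Q * DD dK a P = P * DD dK a Q := by
    have hz : aeval α (Q * DD dK a P - P * DD dK a Q) = aeval α (0 : Polynomial K) := by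
      rw [map_zero, map_sub, map_mul, map_mul, ← key, ← key]
      exact h0
    have := hinj hz
    linear_combination this
  have hQdvd : Q ∣ DD dK a Q :=
    hcopPQ.symm.dvd_of_dvd_mul_left ⟨DD dK a P, heq.symm⟩
  have hQ1 : Q = 1 := by
    rcases Nat.eq_zero_or_pos Q.natDegree with h | h
    · exact hQm.natDegree_eq_zero.mp h
    · exfalso
      have hDDQ : DD dK a Q = 0 :=
        Polynomial.eq_zero_of_dvd_of_degree_lt hQdvd
          (degDD Q h (by rw [hQm.leadingCoeff]; simp))
      have := natDegree_eq_zero_of_DD_eq_zero dK a ha hDDQ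
      omega
  have hDP : DD dK a P = 0 := by
    rw [hQ1, DD_one, mul_zero, one_mul] at heq
    exact heq
  have hPdeg : P.natDegree = 0 := natDegree_eq_zero_of_DD_eq_zero dK a ha hDP
  have hPC : P = C (P.coeff 0) := Polynomial.eq_C_of_natDegree_eq_zero hPdeg
  refine ⟨P.coeff 0, ?_, ?_⟩
  · have h1 := congrArg (fun s => Polynomial.coeff s 0) hDP
    simp only [coeff_DD, coeff_zero] at h1
    rwa [show P.coeff (0 + 1) = 0 from coeff_eq_zero_of_natDegree_lt (by omega),
      zero_mul, mul_zero, add_zero] at h1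
  · rw [hxPQ, hQ1, map_one, div_one]
    conv_rhs => rw [hPC]
    rw [aeval_C]
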